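/- Let N ≥ 1, T ∈ ℝ, k = 1/(4(N+2)), and for a constant C > 0 define u_C(x,t) = k|x|²/(T−t) + C·(T−t)^{-N/(N+2)} for x ∈ ℝ^N and t < T. Then: (a) u_C is a classical solution of the porous medium equation with exponent m = 2, i.e. ∂u_C/∂t (x,t) = Δ_x(u_C²)(x,t) at every point of ℝ^N × (−∞,T); and (b) for C₁ > C₂ > 0 the difference u_{C₁}(x,t) − u_{C₂}(x,t) = (C₁−C₂)(T−t)^{-N/(N+2)} is constant in space and tends to +∞ as t → T⁻, so the sup-norm of the difference of these two solutions blows up in finite time. -/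

import Mathlib

open MeasureTheory Real Filter Topology Set

noncomputable section

/-- The Laplacian of `f : ℝ^N → ℝ` at `x`, as the sum of the second derivatives
along the coordinate directions. -/
def lap {N : ℕ} (f : EuclideanSpace ℝ (Fin N) → ℝ) (x : EuclideanSpace ℝ (Fin N)) : ℝ :=
  ∑ i : Fin N, deriv (deriv (fun s : ℝ => f (x + s • EuclideanSpace.single i (1 : ℝ)))) 0

/-- The blow-up solution `u_C(x,t) = k|x|²/(T-t) + C (T-t)^{-N/(N+2)}` of the
porous medium equation with `m = 2`, where `k = 1/(4(N+2))`. -/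
def pmeBlowup (N : ℕ) (T C : ℝ) (x : EuclideanSpace ℝ (Fin N)) (t : ℝ) : ℝ :=
  (1 / (4 * ((N : ℝ) + 2))) * ‖x‖ ^ 2 / (T - t) + C * (T - t) ^ (-(N : ℝ) / (N + 2))

/-- Second derivative of a quartic polynomial at `0`. -/
lemma quartic_second_deriv (a b c d e : ℝ) :
    deriv (deriv (fun s : ℝ => a + b*s + c*s^2 + d*s^3 + e*s^4)) 0 = 2*c := by
  have h1 : ∀ s : ℝ, HasDerivAt (fun s : ℝ => a + b*s + c*s^2 + d*s^3 + e*s^4)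
      (b + 2*c*s + 3*d*s^2 + 4*e*s^3) s := by
    intro s
    have : HasDerivAt (fun s : ℝ => a + b*s + c*s^2 + d*s^3 + e*s^4)
        (0 + (b*1) + (c*(2*s^1)) + (d*(3*s^2)) + (e*(4*s^3))) s := by
      exact (((((hasDerivAt_const s a).add
        ((hasDerivAt_id s).const_mul b)).add
        ((hasDerivAt_pow 2 s).const_mul c)).add
        ((hasDerivAt_pow 3 s).const_mul d)).add
        ((hasDerivAt_pow 4 s).const_mul e))
    convert this using 1
    ring
  have h2 : deriv (fun s : ℝ => a + b*s + c*s^2 + d*s^3 + e*s^4)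
      = fun s : ℝ => b + 2*c*s + 3*d*s^2 + 4*e*s^3 := by
    funext s; exact (h1 s).deriv
  rw [h2]
  have h3 : HasDerivAt (fun s : ℝ => b + 2*c*s + 3*d*s^2 + 4*e*s^3)
      (0 + (2*c*1) + (3*d*(2*(0:ℝ)^1)) + (4*e*(3*(0:ℝ)^2))) 0 := by
    exact ((((hasDerivAt_const (0:ℝ) b).add
      ((hasDerivAt_id (0:ℝ)).const_mul (2*c))).add
      ((hasDerivAt_pow 2 (0:ℝ)).const_mul (3*d))).add
      ((hasDerivAt_pow 3 (0:ℝ)).const_mul (4*e)))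
  have := h3.deriv
  rw [this]; ring

lemma sq_norm_line (N : ℕ) (x : EuclideanSpace ℝ (Fin N)) (i : Fin N) (s : ℝ) :
    ‖x + s • EuclideanSpace.single i (1 : ℝ)‖ ^ 2 = ‖x‖^2 + 2 * (x i) * s + s^2 := by
  rw [norm_add_sq_real]
  have h1 : ‖s • EuclideanSpace.single i (1:ℝ)‖ = |s| := by
    rw [norm_smul, EuclideanSpace.norm_single]
    simp [abs_of_nonneg]
  have h2 : (inner ℝ x (s • EuclideanSpace.single i (1:ℝ)) : ℝ) = s * x i := by
    rw [real_inner_smul_right, EuclideanSpace.inner_single_right]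
    simp
  rw [h1, h2, sq_abs]
  ring

/-- The functions `u_C` solve the PME `∂_t u = Δ(u²)` classically for `t < T`;
for `C₁ > C₂ > 0` their difference is the spatially constant function
`(C₁-C₂)(T-t)^{-N/(N+2)}`, which blows up as `t → T⁻`, so the sup-norm of the
difference of two solutions blows up in finite time. -/
theorem pme_blowup_solutions (N : ℕ) (hN : 1 ≤ N) (T : ℝ) :
    (∀ C : ℝ, 0 < C → ∀ (x : EuclideanSpace ℝ (Fin N)) (t : ℝ), t < T →
      deriv (fun s => pmeBlowup N T C x s) t
        = lap (fun y => (pmeBlowup N T C y t) ^ 2) x) ∧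
    (∀ C₁ C₂ : ℝ, 0 < C₂ → C₂ < C₁ →
      (∀ (x : EuclideanSpace ℝ (Fin N)) (t : ℝ), t < T →
        pmeBlowup N T C₁ x t - pmeBlowup N T C₂ x t
          = (C₁ - C₂) * (T - t) ^ (-(N : ℝ) / (N + 2))) ∧
      Tendsto (fun t : ℝ => (C₁ - C₂) * (T - t) ^ (-(N : ℝ) / (N + 2)))
        (𝓝[<] T) atTop) := by
  have hN2 : (0:ℝ) < (N:ℝ) + 2 := by positivity
  set α : ℝ := -(N : ℝ) / (N + 2) with hα
  set k : ℝ := 1 / (4 * ((N : ℝ) + 2)) with hk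
  constructor
  · -- PDE part
    intro C hC x t ht
    have hTt : (0:ℝ) < T - t := sub_pos.2 ht
    have hTt' : T - t ≠ 0 := ne_of_gt hTt
    -- time derivative
    have hderiv_t : HasDerivAt (fun s => pmeBlowup N T C x s)
        (k * ‖x‖^2 / (T - t)^2 + C * ((-1) * α * (T - t) ^ (α - 1))) t := by
      have h1 : HasDerivAt (fun s : ℝ => T - s) (-1) t := by
        simpa using (hasDerivAt_id' t).const_sub T
      have h2 : HasDerivAt (fun s : ℝ => (T - s)⁻¹) (-(-1) / (T - t)^2) t := by
        exact h1.inv hTt'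
      have h3 : HasDerivAt (fun s : ℝ => k * ‖x‖^2 * (T - s)⁻¹)
          (k * ‖x‖^2 * (-(-1) / (T - t)^2)) t := h2.const_mul _
      have h4 : HasDerivAt (fun s : ℝ => (T - s) ^ α) ((-1) * α * (T - t) ^ (α - 1)) t :=
        h1.rpow_const (Or.inl hTt')
      have h5 : HasDerivAt (fun s : ℝ => C * (T - s) ^ α)
          (C * ((-1) * α * (T - t) ^ (α - 1))) t := h4.const_mul _
      have h6 := h3.add h5
      have hfun : (fun s => pmeBlowup N T C x s)
          = fun s => k * ‖x‖^2 * (T - s)⁻¹ + C * (T - s) ^ α := by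
        funext s; unfold pmeBlowup; rw [← hα, ← hk]; ring
      rw [hfun]
      exact h6.congr_deriv (by ring)
    rw [hderiv_t.deriv]
    -- Laplacian side
    unfold lap
    set a : ℝ := k / (T - t) with ha
    set b : ℝ := C * (T - t) ^ α with hb
    have hf : ∀ i : Fin N, (fun s : ℝ =>
        (pmeBlowup N T C (x + s • EuclideanSpace.single i (1:ℝ)) t) ^ 2)
        = fun s : ℝ => (a*‖x‖^2 + b)^2 + (2*(a*‖x‖^2 + b)*(2*a*(x i)))*s
          + ((2*a*(x i))^2 + 2*(a*‖x‖^2 + b)*a)*s^2 + (2*(2*a*(x i))*a)*s^3 + a^2*s^4 := by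
      intro i
      funext s
      unfold pmeBlowup
      rw [sq_norm_line, ← hα]
      have : (1 / (4 * ((N : ℝ) + 2))) * (‖x‖^2 + 2 * (x i) * s + s^2) / (T - t)
          + C * (T - t) ^ α = (a*‖x‖^2 + b) + (2*a*(x i))*s + a*s^2 := by
        rw [ha, hb, hk]; field_simp; ring
      rw [this]; ring
    have hlapval : ∀ i : Fin N,
        deriv (deriv (fun s : ℝ =>
          (pmeBlowup N T C (x + s • EuclideanSpace.single i (1:ℝ)) t) ^ 2)) 0
        = 2*((2*a*(x i))^2 + 2*(a*‖x‖^2 + b)*a) := by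
      intro i
      rw [hf i, quartic_second_deriv]
    calc k * ‖x‖^2 / (T - t)^2 + C * ((-1) * α * (T - t) ^ (α - 1))
        = ∑ i : Fin N, 2*((2*a*(x i))^2 + 2*(a*‖x‖^2 + b)*a) := by
          have hsum : ∑ i : Fin N, 2*((2*a*(x i))^2 + 2*(a*‖x‖^2 + b)*a)
              = 8*a^2*(∑ i : Fin N, (x i)^2) + (N:ℝ)*(4*(a*‖x‖^2 + b)*a) := by
            have : ∀ i : Fin N, 2*((2*a*(x i))^2 + 2*(a*‖x‖^2 + b)*a)
                = 8*a^2*(x i)^2 + 4*(a*‖x‖^2 + b)*a := fun i => by ring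
            rw [Finset.sum_congr rfl fun i _ => this i, Finset.sum_add_distrib,
              Finset.sum_const, ← Finset.mul_sum, Finset.card_univ]
            simp [nsmul_eq_mul]
          have hnorm : ∑ i : Fin N, (x i)^2 = ‖x‖^2 := by
            rw [EuclideanSpace.norm_eq, sq_sqrt (by positivity)]
            simp [sq_abs]
          rw [hsum, hnorm]
          have hrpow : (T - t) ^ (α - 1) = (T - t) ^ α / (T - t) :=
            Real.rpow_sub_one hTt' α
          rw [hrpow, ha, hb, hk, hα]
          field_simp
          ring
      _ = _ := by
          exact (Finset.sum_congr rfl fun i _ => (hlapval i).symm)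
  · -- blow-up part
    intro C₁ C₂ hC₂ hC
    constructor
    · intro x t ht
      unfold pmeBlowup
      ring
    · have hαpos : (0:ℝ) < (N:ℝ) / (N + 2) := by
        apply div_pos _ hN2
        exact_mod_cast Nat.lt_of_lt_of_le Nat.zero_lt_one hN
      have h1 : Tendsto (fun t : ℝ => T - t) (𝓝[<] T) (𝓝[>] 0) := by
        rw [tendsto_nhdsWithin_iff]
        constructor
        · have : Tendsto (fun t : ℝ => T - t) (𝓝 T) (𝓝 (T - T)) :=
            (continuous_const.sub continuous_id).tendsto T
          simpa using this.mono_left nhdsWithin_le_nhds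
        · exact eventually_mem_nhdsWithin.mono fun t ht => mem_Ioi.2 (sub_pos.2 ht)
      have h2 : Tendsto (fun y : ℝ => y ^ α) (𝓝[>] (0:ℝ)) atTop := by
        have h3 : Tendsto (fun y : ℝ => (y⁻¹) ^ ((N:ℝ)/(N+2))) (𝓝[>] (0:ℝ)) atTop :=
          (tendsto_rpow_atTop hαpos).comp tendsto_inv_nhdsGT_zero
        apply h3.congr'
        filter_upwards [self_mem_nhdsWithin] with y hy
        rw [← Real.rpow_neg_one y, ← Real.rpow_mul (le_of_lt hy)]
        congr 1
        rw [hα]; ring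
      have h4 : Tendsto (fun t : ℝ => (T - t) ^ α) (𝓝[<] T) atTop := h2.comp h1
      exact h4.const_mul_atTop (sub_pos.2 hC)
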